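/- If G is a graph satisfying the Erdős–Faber–Lovász hypothesis (G is the union of n complete graphs A_1, …, A_n, each on exactly n vertices, with every pair of the complete graphs sharing at most one common vertex), and for every d with 2 ≤ d ≤ n and every i (1 ≤ i ≤ n) the complete graph A_i contains at most ⌈n/d⌉ vertices of clique degree greater than or equal to d, then G has a proper vertex coloring with n colors (the chromatic number of G is at most n). -/

import Mathlib

open Classical in
noncomputable def gcol (n : ℕ) (hn : 0 < n) (P : ℕ → ℕ → Prop) : ℕ → Fin n
  | k =>
    let used : Finset (Fin n) :=
      ((Finset.range k).filter (fun j => P j k)).attach.image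
        (fun j => gcol n hn P j.1)
    if h : (Finset.univ \ used).Nonempty then h.choose else ⟨0, hn⟩
  decreasing_by exact Finset.mem_range.mp (Finset.mem_filter.mp j.2).1

open Classical in
lemma gcol_ne (n : ℕ) (hn : 0 < n) (P : ℕ → ℕ → Prop) (k : ℕ)
    (hb : ∀ s : Finset ℕ, (∀ j ∈ s, j < k ∧ P j k) → s.card < n)
    (j : ℕ) (hj : j < k) (hPj : P j k) : gcol n hn P k ≠ gcol n hn P j := by
  rw [gcol]
  set used : Finset (Fin n) :=
      ((Finset.range k).filter (fun j => P j k)).attach.image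
        (fun j => gcol n hn P j.1) with hused
  have hcard : used.card < n := by
    refine lt_of_le_of_lt Finset.card_image_le ?_
    rw [Finset.card_attach]
    exact hb _ (fun j hj => ⟨Finset.mem_range.mp (Finset.mem_filter.mp hj).1,
      (Finset.mem_filter.mp hj).2⟩)
  have hne : (Finset.univ \ used).Nonempty := by
    rw [Finset.sdiff_nonempty]
    intro hsub
    have := Finset.card_le_card hsub
    simp at this
    omega
  rw [dif_pos hne]
  have h1 : hne.choose ∈ Finset.univ \ used := hne.choose_spec
  have h2 : gcol n hn P j ∈ used := by
    rw [hused]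
    exact Finset.mem_image.mpr ⟨⟨j, Finset.mem_filter.mpr ⟨Finset.mem_range.mpr hj, hPj⟩⟩,
      Finset.mem_attach _ _, rfl⟩
  intro heq
  rw [Finset.mem_sdiff] at h1
  exact h1.2 (heq ▸ h2)

theorem efl_ceil_bound {V : Type*} [DecidableEq V] (n : ℕ) (hn : 1 ≤ n)
    (A : Fin n → Finset V)
    (hcard : ∀ i, (A i).card = n)
    (hint : ∀ i j, i ≠ j → (A i ∩ A j).card ≤ 1)
    (G : SimpleGraph V)
    (hG : ∀ u v, G.Adj u v ↔ u ≠ v ∧ ∃ i, u ∈ A i ∧ v ∈ A i)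
    (hceil : ∀ d, 2 ≤ d → d ≤ n → ∀ i, ((A i).filter (fun v =>
        d ≤ (Finset.univ.filter (fun j => v ∈ A j)).card)).card ≤ (n + d - 1) / d) :
    G.Colorable n := by
  classical
  set deg : V → ℕ := fun v => (Finset.univ.filter (fun j => v ∈ A j)).card with hdeg
  set S : Finset V := Finset.univ.biUnion A with hS
  set L : List V := S.toList.mergeSort (fun u v => decide (deg v ≤ deg u)) with hL
  have hperm : L.Perm S.toList := List.mergeSort_perm _ _
  have hnd : L.Nodup := hperm.symm.nodup S.nodup_toList
  have hmemL : ∀ v, v ∈ L ↔ v ∈ S := fun v => hperm.mem_iff.trans Finset.mem_toList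
  have hsorted : ∀ (i j : Fin L.length), i < j → deg (L.get j) ≤ deg (L.get i) := by
    have hs := List.pairwise_mergeSort (le := fun u v => decide (deg v ≤ deg u))
      (fun a b c hab hbc => by
        simp only [decide_eq_true_iff] at *; omega)
      (fun a b => by simp only [Bool.or_eq_true, decide_eq_true_iff]; omega)
      S.toList
    rw [← hL] at hs
    rw [List.pairwise_iff_get] at hs
    intro i j hij
    have := hs i j hij
    simpa using this
  have hgetinj : ∀ (i j : Fin L.length), L.get i = L.get j → i = j :=
    fun i j h => (List.nodup_iff_injective_get.mp hnd) h
  set P : ℕ → ℕ → Prop := fun j k =>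
    ∃ (hj : j < L.length) (hk : k < L.length), G.Adj (L.get ⟨j, hj⟩) (L.get ⟨k, hk⟩) with hP
  -- the key bound
  have key : ∀ k, k < L.length → ∀ s : Finset ℕ, (∀ j ∈ s, j < k ∧ P j k) → s.card < n := by
    intro k hk E hs
    set v : V := L.get ⟨k, hk⟩ with hv
    set d : ℕ := deg v with hd
    set f : ℕ → V := fun j => if h : j < L.length then L.get ⟨j, h⟩ else v with hf
    have hEsub : ∀ j ∈ E, j < k := fun j hj => (hs j hj).1
    have hinj : Set.InjOn f E := by
      intro a ha b hb hab
      have ha' : a < L.length := lt_trans (hEsub a ha) hk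
      have hb' : b < L.length := lt_trans (hEsub b hb) hk
      rw [hf] at hab
      simp only [dif_pos ha', dif_pos hb'] at hab
      exact congrArg Fin.val (hgetinj ⟨a, ha'⟩ ⟨b, hb'⟩ hab)
    have hcardE : E.card = (E.image f).card := (Finset.card_image_of_injOn hinj).symm
    set I : Finset (Fin n) := Finset.univ.filter (fun i => v ∈ A i) with hI
    set B : Finset V := I.biUnion
        (fun i => ((A i).filter (fun u => d ≤ deg u)).erase v) with hB
    have hsub : E.image f ⊆ B := by
      intro u hu
      rcases Finset.mem_image.mp hu with ⟨j, hjE, hju⟩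
      have hjk : j < k := hEsub j hjE
      have hj' : j < L.length := lt_trans hjk hk
      rcases (hs j hjE).2 with ⟨hj2, hk2, hadj⟩
      have hueq : u = L.get ⟨j, hj'⟩ := by
        rw [← hju, hf]; simp [dif_pos hj']
      have hadj' : G.Adj u v := by
        rw [hueq]; exact hadj
      rw [hG] at hadj'
      rcases hadj' with ⟨hne, i, hui, hvi⟩
      have hdegu : d ≤ deg u := by
        rw [hueq, hd, hv]
        exact hsorted ⟨j, hj'⟩ ⟨k, hk⟩ hjk
      refine Finset.mem_biUnion.mpr ⟨i, ?_, ?_⟩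
      · rw [hI]; simp [hvi]
      · exact Finset.mem_erase.mpr ⟨hne, Finset.mem_filter.mpr ⟨hui, hdegu⟩⟩
    have hvS : v ∈ S := (hmemL v).mp (List.get_mem L ⟨k, hk⟩)
    have hd1 : 1 ≤ d := by
      rw [hS] at hvS
      rcases Finset.mem_biUnion.mp hvS with ⟨i, _, hvi⟩
      rw [hd, hdeg]
      exact Finset.card_pos.mpr ⟨i, Finset.mem_filter.mpr ⟨Finset.mem_univ i, hvi⟩⟩
    have hId : I.card = d := rfl
    have hdn : d ≤ n := by
      rw [← hId]
      exact le_trans (Finset.card_le_univ I) (by simp)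
    have hvfilter : ∀ i ∈ I, v ∈ (A i).filter (fun u => d ≤ deg u) := by
      intro i hi
      exact Finset.mem_filter.mpr ⟨(Finset.mem_filter.mp hi).2, le_refl d⟩
    have hBcard : B.card < n := by
      rcases eq_or_lt_of_le hd1 with h1 | h2
      · -- d = 1
        have hle : B.card ≤ ∑ i ∈ I, (((A i).filter (fun u => d ≤ deg u)).erase v).card :=
          Finset.card_biUnion_le
        have hterm : ∀ i ∈ I, (((A i).filter (fun u => d ≤ deg u)).erase v).card ≤ n - 1 := by
          intro i hi
          rw [Finset.card_erase_of_mem (hvfilter i hi)]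
          have : ((A i).filter (fun u => d ≤ deg u)).card ≤ n := by
            refine le_trans (Finset.card_le_card (Finset.filter_subset _ _)) ?_
            rw [hcard i]
          omega
        have hBle : B.card ≤ I.card * (n - 1) := by
          refine le_trans hle ?_
          calc ∑ i ∈ I, (((A i).filter (fun u => d ≤ deg u)).erase v).card
              ≤ ∑ _i ∈ I, (n - 1) := Finset.sum_le_sum hterm
            _ = I.card * (n - 1) := by rw [Finset.sum_const, smul_eq_mul]
        rw [hId, ← h1, one_mul] at hBle
        omega
      · -- 2 ≤ d
        obtain ⟨q, hq⟩ : ∃ q, (n + d - 1) / d = q := ⟨_, rfl⟩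
        have hq1 : 1 ≤ q := by
          rw [← hq, Nat.le_div_iff_mul_le (by omega)]; omega
        have hqd : d * q ≤ n + d - 1 := by
          rw [← hq, Nat.mul_comm]; exact Nat.div_mul_le_self _ _
        have hterm : ∀ i ∈ I, (((A i).filter (fun u => d ≤ deg u)).erase v).card ≤ q - 1 := by
          intro i hi
          rw [Finset.card_erase_of_mem (hvfilter i hi)]
          have h7 := hceil d h2 hdn i
          rw [hq] at h7
          simp only [hdeg]
          omega
        have hsum : B.card ≤ d * (q - 1) := by
          refine le_trans Finset.card_biUnion_le ?_
          calc ∑ i ∈ I, (((A i).filter (fun u => d ≤ deg u)).erase v).card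
              ≤ ∑ _i ∈ I, (q - 1) := Finset.sum_le_sum hterm
            _ = d * (q - 1) := by rw [Finset.sum_const, smul_eq_mul, hId]
        have hmul : d * (q - 1) + d * 1 = d * q := by
          rw [← Nat.mul_add]; congr 1; omega
        omega
    calc E.card = (E.image f).card := hcardE
      _ ≤ B.card := Finset.card_le_card hsub
      _ < n := hBcard
  -- the coloring
  set c : V → Fin n := fun v => if h : v ∈ L then gcol n hn P (L.idxOf v) else ⟨0, hn⟩ with hc
  refine ⟨SimpleGraph.Coloring.mk c ?_⟩
  intro u v hadj
  rcases (hG u v).mp hadj with ⟨hne, i, hui, hvi⟩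
  have huL : u ∈ L := (hmemL u).mpr (Finset.mem_biUnion.mpr ⟨i, Finset.mem_univ i, hui⟩)
  have hvL : v ∈ L := (hmemL v).mpr (Finset.mem_biUnion.mpr ⟨i, Finset.mem_univ i, hvi⟩)
  have hku : L.idxOf u < L.length := List.idxOf_lt_length_iff.mpr huL
  have hkv : L.idxOf v < L.length := List.idxOf_lt_length_iff.mpr hvL
  have hgu : L.get ⟨L.idxOf u, hku⟩ = u := List.idxOf_get hku
  have hgv : L.get ⟨L.idxOf v, hkv⟩ = v := List.idxOf_get hkv
  have hkne : L.idxOf u ≠ L.idxOf v := by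
    intro h
    apply hne
    rw [← hgu, ← hgv]
    congr 1
    exact Fin.ext h
  rw [hc]
  simp only [dif_pos huL, dif_pos hvL]
  rcases lt_or_gt_of_ne hkne with hlt | hgt
  · have hP' : P (L.idxOf u) (L.idxOf v) := ⟨hku, hkv, by rw [hgu, hgv]; exact hadj⟩
    exact (gcol_ne n hn P _ (key _ hkv) _ hlt hP').symm
  · have hP' : P (L.idxOf v) (L.idxOf u) := ⟨hkv, hku, by rw [hgu, hgv]; exact hadj.symm⟩
    exact gcol_ne n hn P _ (key _ hku) _ hgt hP'
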